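/- The space of linear embeddings of a finite-dimensional real vector space V into ℝ^∞ = colim ℝ^n is contractible. -/

import Mathlib

noncomputable section

open Function Finsupp Topology

variable (V : Type) [AddCommGroup V] [Module ℝ V] [FiniteDimensional ℝ V]

/-- The space of linear embeddings of `V` into `ℝⁿ`, topologized by pointwise
convergence. -/
def EmbFin (n : ℕ) := {f : V →ₗ[ℝ] (Fin n → ℝ) // Function.Injective f}

instance (n : ℕ) : TopologicalSpace (EmbFin V n) :=
  TopologicalSpace.induced (fun f : EmbFin V n => (f.1 : V → Fin n → ℝ)) inferInstance

/-- The space of linear embeddings of `V` into `ℝ^∞ = colim ℝⁿ` (realized as the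
finitely supported sequences `ℕ →₀ ℝ`). -/
def EmbInf := {f : V →ₗ[ℝ] (ℕ →₀ ℝ) // Function.Injective f}

/-- The inclusion of the space of embeddings into `ℝⁿ` into the space of embeddings
into `ℝ^∞`, via the standard inclusion `ℝⁿ ⊆ ℝ^∞`. -/
def extendEmb (n : ℕ) (f : EmbFin V n) : EmbInf V :=
  ⟨(Finsupp.lmapDomain ℝ ℝ (Fin.val : Fin n → ℕ)) ∘ₗ
      ((Finsupp.linearEquivFunOnFinite ℝ ℝ (Fin n)).symm.toLinearMap ∘ₗ f.1), by
    have h1 : Function.Injective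
        (Finsupp.mapDomain (Fin.val : Fin n → ℕ) : (Fin n →₀ ℝ) → (ℕ →₀ ℝ)) :=
      Finsupp.mapDomain_injective Fin.val_injective
    exact h1.comp ((Finsupp.linearEquivFunOnFinite ℝ ℝ (Fin n)).symm.injective.comp f.2)⟩

/-- `EmbInf` carries the colimit (weak) topology induced by the spaces of embeddings
`V → ℝⁿ`. -/
instance : TopologicalSpace (EmbInf V) :=
  ⨆ n : ℕ, TopologicalSpace.coinduced (extendEmb V n) inferInstance

/-! ### Auxiliary development -/

/-- Shorthand for `ℝ^∞`. -/
abbrev LL := ℕ →₀ ℝ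

/-- The shift onto even coordinates. -/
def sigmaMap : LL →ₗ[ℝ] LL := Finsupp.lmapDomain ℝ ℝ (fun k => 2 * k)

lemma double_injective : Function.Injective (fun k : ℕ => 2 * k) := by
  intro a b h
  have h2 : 2 * a = 2 * b := h
  omega

lemma sigmaMap_apply (x : LL) : sigmaMap x = Finsupp.mapDomain (fun k => 2 * k) x :=
  Finsupp.lmapDomain_apply ℝ ℝ _ x

lemma mapDomain_double_apply (x : LL) (k : ℕ) :
    Finsupp.mapDomain (fun j => 2 * j) x k = if k % 2 = 0 then x (k / 2) else 0 := by
  split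
  · rename_i h
    have hk : k = 2 * (k / 2) := by omega
    conv_lhs => rw [hk]
    exact Finsupp.mapDomain_apply double_injective x (k / 2)
  · rename_i h
    apply Finsupp.mapDomain_notin_range
    rintro ⟨j, rfl⟩
    exact h (Nat.mul_mod_right 2 j)

/-- dimension of V -/
def dV : ℕ := Module.finrank ℝ V

/-- a fixed basis of V -/
def bV : Module.Basis (Fin (dV V)) ℝ V := Module.finBasis ℝ V

/-- The fixed embedding of `V` into the odd coordinates. -/
def jmap : V →ₗ[ℝ] LL :=
  Finsupp.lmapDomain ℝ ℝ (fun i : Fin (dV V) => 2 * (i : ℕ) + 1) ∘ₗ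
    ((Finsupp.linearEquivFunOnFinite ℝ ℝ (Fin (dV V))).symm.toLinearMap ∘ₗ
      (bV V).equivFun.toLinearMap)

lemma odd_injective : Function.Injective (fun i : Fin (dV V) => 2 * (i : ℕ) + 1) := by
  intro a b h
  simp only at h
  exact Fin.ext (by omega)

lemma jmap_injective : Function.Injective (jmap V) := by
  have h1 : Function.Injective
      (Finsupp.mapDomain (fun i : Fin (dV V) => 2 * (i : ℕ) + 1) :
        (Fin (dV V) →₀ ℝ) → LL) :=
    Finsupp.mapDomain_injective (odd_injective V)
  exact h1.comp (((Finsupp.linearEquivFunOnFinite ℝ ℝ (Fin (dV V))).symm.injective).comp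
    (bV V).equivFun.injective)

lemma jmap_apply_even (v : V) (k : ℕ) : (jmap V v) (2 * k) = 0 := by
  show (Finsupp.lmapDomain ℝ ℝ (fun i : Fin (dV V) => 2 * (i : ℕ) + 1) _) (2 * k) = 0
  rw [Finsupp.lmapDomain_apply]
  apply Finsupp.mapDomain_notin_range
  rintro ⟨i, hi⟩
  simp only at hi
  omega

lemma jmap_support (v : V) : ∀ k ∈ (jmap V v).support, k < 2 * dV V + 1 := by
  intro k hk
  have hne : (jmap V v) k ≠ 0 := Finsupp.mem_support_iff.1 hk
  by_contra hlt
  apply hne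
  show (Finsupp.lmapDomain ℝ ℝ (fun i : Fin (dV V) => 2 * (i : ℕ) + 1) _) k = 0
  rw [Finsupp.lmapDomain_apply]
  apply Finsupp.mapDomain_notin_range
  rintro ⟨i, hi⟩
  simp only at hi
  have := i.isLt
  omega

/-! ### Homotopy coefficients -/

def ca (t : ℝ) : ℝ := max (1 - 2 * t) 0
def cb (t : ℝ) : ℝ := min (2 * t) (2 - 2 * t)
def cc (t : ℝ) : ℝ := max (2 * t - 1) 0

lemma continuous_ca : Continuous ca :=
  (continuous_const.sub (continuous_const.mul continuous_id)).max continuous_const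
lemma continuous_cb : Continuous cb :=
  (continuous_const.mul continuous_id).min
    (continuous_const.sub (continuous_const.mul continuous_id))
lemma continuous_cc : Continuous cc :=
  ((continuous_const.mul continuous_id).sub continuous_const).max continuous_const

/-- The swindle family. -/
def combo (t : ℝ) (g : V →ₗ[ℝ] LL) : V →ₗ[ℝ] LL :=
  ca t • g + cb t • (sigmaMap ∘ₗ g) + cc t • jmap V

lemma combo_apply (t : ℝ) (g : V →ₗ[ℝ] LL) (v : V) (k : ℕ) :
    (combo V t g v) k =
      ca t * (g v k) + cb t * (Finsupp.mapDomain (fun j => 2 * j) (g v) k)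
        + cc t * (jmap V v k) := by
  simp [combo, sigmaMap_apply, Finsupp.add_apply, Finsupp.smul_apply, smul_eq_mul]

lemma combo_zero (g : V →ₗ[ℝ] LL) : combo V 0 g = g := by
  have h1 : ca 0 = 1 := by norm_num [ca]
  have h2 : cb 0 = 0 := by norm_num [cb]
  have h3 : cc 0 = 0 := by norm_num [cc]
  simp [combo, h1, h2, h3]

lemma combo_one (g : V →ₗ[ℝ] LL) : combo V 1 g = jmap V := by
  have h1 : ca 1 = 0 := by norm_num [ca]
  have h2 : cb 1 = 0 := by norm_num [cb]
  have h3 : cc 1 = 1 := by norm_num [cc]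
  simp [combo, h1, h2, h3]

/-! ### Injectivity of the swindle -/

lemma key_ne (x : LL) (hx : x ≠ 0) (a b : ℝ) (hab : a + b = 1) :
    a • x + b • Finsupp.mapDomain (fun j => 2 * j) x ≠ 0 := by
  intro h
  have hne : x.support.Nonempty := Finsupp.support_nonempty_iff.2 hx
  set N := x.support.max' hne with hN
  have hNmem : N ∈ x.support := x.support.max'_mem hne
  have hNval : x N ≠ 0 := Finsupp.mem_support_iff.1 hNmem
  have heval : a * x (2 * N) + b * x N = 0 := by
    have h2 := congrArg (fun y : LL => y (2 * N)) h
    simpa [Finsupp.add_apply, Finsupp.smul_apply, smul_eq_mul,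
      Finsupp.mapDomain_apply double_injective x N] using h2
  by_cases hN0 : N = 0
  · rw [hN0] at heval hNval
    simp only [Nat.mul_zero] at heval
    apply hNval
    have hsum : (a + b) * x 0 = 0 := by linarith [heval]
    rw [hab, one_mul] at hsum
    exact hsum
  · have h2N : x (2 * N) = 0 := by
      apply Finsupp.notMem_support_iff.1
      intro hmem
      have := Finset.le_max' x.support _ hmem
      omega
    rw [h2N, mul_zero, zero_add] at heval
    rcases mul_eq_zero.1 heval with hb | hxN
    · apply hx
      have ha : a = 1 := by linarith
      rw [ha, hb, one_smul, zero_smul, add_zero] at h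
      exact h
    · exact hNval hxN

lemma injA (g : V →ₗ[ℝ] LL) (hg : Function.Injective g) (a b : ℝ) (hab : a + b = 1) :
    Function.Injective (a • g + b • (sigmaMap ∘ₗ g)) := by
  intro v w hvw
  have hsub : (a • g + b • (sigmaMap ∘ₗ g)) (v - w) = 0 := by
    rw [map_sub, hvw, sub_self]
  by_contra hne
  have hx : g (v - w) ≠ 0 := by
    intro h0
    exact hne (sub_eq_zero.1 (hg (h0.trans (map_zero g).symm)))
  apply key_ne (g (v - w)) hx a b hab
  simpa [LinearMap.add_apply, LinearMap.smul_apply, sigmaMap_apply] using hsub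

lemma injB (g : V →ₗ[ℝ] LL) (hg : Function.Injective g) (b c : ℝ) (hbc : b + c = 1) :
    Function.Injective (b • (sigmaMap ∘ₗ g) + c • jmap V) := by
  intro v w hvw
  have hsub : (b • (sigmaMap ∘ₗ g) + c • jmap V) (v - w) = 0 := by
    rw [map_sub, hvw, sub_self]
  set u := v - w with hu
  have key : ∀ k, b * (g u) k = 0 := by
    intro k
    have h2 := congrArg (fun y : LL => y (2 * k)) hsub
    simpa [LinearMap.add_apply, LinearMap.smul_apply, Finsupp.add_apply,
      Finsupp.smul_apply, smul_eq_mul, sigmaMap_apply,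
      Finsupp.mapDomain_apply double_injective, jmap_apply_even] using h2
  have hu0 : u = 0 := by
    by_cases hb : b = 0
    · have hc : c = 1 := by linarith
      have hj : jmap V u = 0 := by
        have := hsub
        rw [hb, hc] at this
        simpa using this
      exact jmap_injective V (hj.trans (map_zero (jmap V)).symm)
    · have hgu : g u = 0 := by
        ext k
        have := key k
        rcases mul_eq_zero.1 this with h | h
        · exact absurd h hb
        · simpa using h
      exact hg (hgu.trans (map_zero g).symm)
  exact sub_eq_zero.1 hu0

lemma combo_injective (t : ℝ) (ht : t ∈ Set.Icc (0 : ℝ) 1) (g : V →ₗ[ℝ] LL)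
    (hg : Function.Injective g) : Function.Injective (combo V t g) := by
  obtain ⟨ht0, ht1⟩ := ht
  rcases le_or_gt t (1 / 2) with h | h
  · have hcc : cc t = 0 := by
      rw [cc, max_eq_right]; linarith
    have hca : ca t = 1 - 2 * t := by
      rw [ca, max_eq_left]; linarith
    have hcb : cb t = 2 * t := by
      rw [cb, min_eq_left]; linarith
    rw [combo, hcc, zero_smul, add_zero]
    exact injA V g hg _ _ (by rw [hca, hcb]; ring)
  · have hca : ca t = 0 := by
      rw [ca, max_eq_right]; linarith
    have hcb : cb t = 2 - 2 * t := by
      rw [cb, min_eq_right]; linarith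
    have hcc : cc t = 2 * t - 1 := by
      rw [cc, max_eq_left]; linarith
    rw [combo, hca, zero_smul, zero_add]
    exact injB V g hg _ _ (by rw [hcb, hcc]; ring)

/-! ### Support bounds, truncation and reconstruction -/

lemma extend_support (n : ℕ) (f : EmbFin V n) (v : V) :
    ∀ k ∈ ((extendEmb V n f).1 v).support, k < n := by
  intro k hk
  have : ((extendEmb V n f).1 v) =
      Finsupp.mapDomain (Fin.val : Fin n → ℕ)
        ((Finsupp.linearEquivFunOnFinite ℝ ℝ (Fin n)).symm (f.1 v)) := by
    simp [extendEmb, Finsupp.lmapDomain_apply]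
  rw [this] at hk
  have := Finsupp.mapDomain_support hk
  simp only [Finset.mem_image] at this
  obtain ⟨i, _, rfl⟩ := this
  exact i.isLt

/-- Truncation to the first `m` coordinates. -/
def trunc (m : ℕ) : LL →ₗ[ℝ] (Fin m → ℝ) :=
  LinearMap.pi (fun i : Fin m => Finsupp.lapply (i : ℕ))

lemma trunc_apply (m : ℕ) (x : LL) (i : Fin m) : trunc m x i = x (i : ℕ) := rfl

/-- Reconstructing a finsupp supported below `m` from its truncation. -/
lemma recon (m : ℕ) (x : LL) (hx : ∀ k ∈ x.support, k < m) :
    Finsupp.mapDomain (Fin.val : Fin m → ℕ)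
      ((Finsupp.linearEquivFunOnFinite ℝ ℝ (Fin m)).symm (trunc m x)) = x := by
  have hsymm : ((Finsupp.linearEquivFunOnFinite ℝ ℝ (Fin m)).symm (trunc m x)) =
      Finsupp.equivFunOnFinite.symm (trunc m x) := rfl
  ext k
  by_cases hk : k < m
  · exact (Finsupp.mapDomain_apply Fin.val_injective _ (⟨k, hk⟩ : Fin m)).trans
      (congrFun (Finsupp.coe_equivFunOnFinite_symm _) _)
  · rw [Finsupp.mapDomain_notin_range]
    · symm
      apply Finsupp.notMem_support_iff.1
      intro hmem
      exact hk (hx k hmem)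
    · rintro ⟨i, rfl⟩
      exact hk i.isLt

/-- If a linear map into `ℝ^∞` lands in the first `m` coordinates and is injective,
its truncation gives an element of `EmbFin V m` mapping back to it. -/
lemma extend_trunc (m : ℕ) (g : V →ₗ[ℝ] LL) (hsupp : ∀ v, ∀ k ∈ (g v).support, k < m) :
    ∀ v, ((Finsupp.lmapDomain ℝ ℝ (Fin.val : Fin m → ℕ)) ∘ₗ
      ((Finsupp.linearEquivFunOnFinite ℝ ℝ (Fin m)).symm.toLinearMap ∘ₗ
        (trunc m ∘ₗ g))) v = g v := by
  intro v
  simp only [LinearMap.comp_apply, Finsupp.lmapDomain_apply, LinearEquiv.coe_coe]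
  exact recon m (g v) (hsupp v)

lemma trunc_comp_injective (m : ℕ) (g : V →ₗ[ℝ] LL) (hg : Function.Injective g)
    (hsupp : ∀ v, ∀ k ∈ (g v).support, k < m) :
    Function.Injective (trunc m ∘ₗ g) := by
  intro v w h
  apply hg
  rw [← extend_trunc V m g hsupp v, ← extend_trunc V m g hsupp w]
  simp only [LinearMap.comp_apply] at h ⊢
  rw [h]

/-! ### The step maps and their continuity -/

/-- bound for coordinates used by the swindle at stage `n` -/
def Mn (n : ℕ) : ℕ := max (2 * n) (2 * dV V + 1)

lemma combo_support (t : ℝ) (n : ℕ) (f : EmbFin V n) (v : V) :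
    ∀ k ∈ ((combo V t (extendEmb V n f).1) v).support, k < Mn V n := by
  intro k hk
  have hval : ((combo V t (extendEmb V n f).1) v) k ≠ 0 := Finsupp.mem_support_iff.1 hk
  by_contra hlt
  push_neg at hlt
  have hMn : ¬ k < Mn V n := not_lt.2 hlt
  apply hval
  rw [combo_apply]
  have h1 : ((extendEmb V n f).1 v) k = 0 := by
    apply Finsupp.notMem_support_iff.1
    intro hmem
    have := extend_support V n f v k hmem
    have : k < Mn V n := lt_of_lt_of_le this (le_trans (by omega) (le_max_left _ _))
    exact hMn this
  have h2 : Finsupp.mapDomain (fun j => 2 * j) ((extendEmb V n f).1 v) k = 0 := by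
    rw [mapDomain_double_apply]
    split
    · apply Finsupp.notMem_support_iff.1
      intro hmem
      have := extend_support V n f v _ hmem
      have hkval : k < 2 * n := by omega
      exact hMn (lt_of_lt_of_le hkval (le_max_left _ _))
    · rfl
  have h3 : (jmap V v) k = 0 := by
    apply Finsupp.notMem_support_iff.1
    intro hmem
    have := jmap_support V v k hmem
    exact hMn (lt_of_lt_of_le this (le_max_right _ _))
  rw [h1, h2, h3]
  ring

/-- The swindle at stage `n`, landing in `EmbFin V (Mn n)`. -/
def stepEmb (n : ℕ) (p : unitInterval × EmbFin V n) : EmbFin V (Mn V n) :=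
  ⟨trunc (Mn V n) ∘ₗ combo V (p.1 : ℝ) (extendEmb V n p.2).1,
    trunc_comp_injective V (Mn V n) _
      (combo_injective V _ p.1.2 _ (extendEmb V n p.2).2)
      (combo_support V _ n p.2)⟩

/-- The homotopy on `EmbInf`. -/
def Hfun (p : unitInterval × EmbInf V) : EmbInf V :=
  ⟨combo V (p.1 : ℝ) p.2.1, combo_injective V _ p.1.2 _ p.2.2⟩

lemma extend_step (n : ℕ) (p : unitInterval × EmbFin V n) :
    extendEmb V (Mn V n) (stepEmb V n p) = Hfun V (p.1, extendEmb V n p.2) := by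
  apply Subtype.ext
  apply LinearMap.ext
  intro v
  show ((Finsupp.lmapDomain ℝ ℝ (Fin.val : Fin (Mn V n) → ℕ)) ∘ₗ
      ((Finsupp.linearEquivFunOnFinite ℝ ℝ (Fin (Mn V n))).symm.toLinearMap ∘ₗ
        (trunc (Mn V n) ∘ₗ combo V (p.1 : ℝ) (extendEmb V n p.2).1))) v =
    combo V (p.1 : ℝ) (extendEmb V n p.2).1 v
  exact extend_trunc V (Mn V n) _ (combo_support V _ n p.2) v

lemma cont_eval (n : ℕ) (v : V) (i : Fin n) :
    Continuous fun f : EmbFin V n => f.1 v i :=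
  (continuous_apply i).comp ((continuous_apply v).comp continuous_induced_dom)

lemma extend_coord (n : ℕ) (f : EmbFin V n) (v : V) (k : ℕ) :
    ((extendEmb V n f).1 v) k = if h : k < n then f.1 v ⟨k, h⟩ else 0 := by
  have hrep : ((extendEmb V n f).1 v) =
      Finsupp.mapDomain (Fin.val : Fin n → ℕ)
        (Finsupp.equivFunOnFinite.symm (f.1 v)) := by
    simp [extendEmb, Finsupp.lmapDomain_apply]
    rfl
  rw [hrep]
  split
  · rename_i h
    exact (Finsupp.mapDomain_apply Fin.val_injective _ (⟨k, h⟩ : Fin n)).trans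
      (congrFun (Finsupp.coe_equivFunOnFinite_symm _) _)
  · rename_i h
    apply Finsupp.mapDomain_notin_range
    rintro ⟨i, rfl⟩
    exact h i.isLt

lemma cont_extend_coord (n : ℕ) (v : V) (k : ℕ) :
    Continuous fun f : EmbFin V n => ((extendEmb V n f).1 v) k := by
  simp only [extend_coord]
  by_cases h : k < n
  · simp only [dif_pos h]
    exact cont_eval V n v ⟨k, h⟩
  · simp only [dif_neg h]
    exact continuous_const

lemma cont_step (n : ℕ) : Continuous (stepEmb V n) := by
  apply continuous_induced_rng.2
  apply continuous_pi
  intro v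
  apply continuous_pi
  intro i
  show Continuous fun p : unitInterval × EmbFin V n =>
    (combo V (p.1 : ℝ) (extendEmb V n p.2).1 v) ((i : Fin (Mn V n)) : ℕ)
  simp only [combo_apply]
  have hct : Continuous fun p : unitInterval × EmbFin V n => (p.1 : ℝ) :=
    continuous_subtype_val.comp continuous_fst
  apply Continuous.add
  apply Continuous.add
  · exact (continuous_ca.comp hct).mul
      ((cont_extend_coord V n v (i : ℕ)).comp continuous_snd)
  · apply (continuous_cb.comp hct).mul
    have : (fun p : unitInterval × EmbFin V n =>
        Finsupp.mapDomain (fun j => 2 * j) ((extendEmb V n p.2).1 v) (i : ℕ)) =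
        fun p => if ((i : ℕ)) % 2 = 0 then ((extendEmb V n p.2).1 v) ((i : ℕ) / 2) else 0 := by
      funext p
      rw [mapDomain_double_apply]
    rw [this]
    by_cases h : ((i : ℕ)) % 2 = 0
    · simp only [if_pos h]
      exact (cont_extend_coord V n v ((i : ℕ) / 2)).comp continuous_snd
    · simp only [if_neg h]
      exact continuous_const
  · exact (continuous_cc.comp hct).mul continuous_const

/-! ### The quotient map from the sigma type -/

/-- The canonical map from the disjoint union of the `EmbFin V n`. -/
def bigF (p : Σ n : ℕ, EmbFin V n) : EmbInf V := extendEmb V p.1 p.2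

lemma bigF_surjective : Function.Surjective (bigF V) := by
  intro f
  set n : ℕ := (Finset.univ.sup fun i : Fin (dV V) => ((f.1 (bV V i)).support.sup id)) + 1
    with hn
  have hbasis : ∀ i : Fin (dV V), f.1 (bV V i) ∈ Finsupp.supported ℝ ℝ (Set.Iio n) := by
    intro i
    rw [Finsupp.mem_supported]
    intro k hk
    simp only [Set.mem_Iio]
    have h1 : k ≤ (f.1 (bV V i)).support.sup id := Finset.le_sup (f := id) hk
    have h2 : ((f.1 (bV V i)).support.sup id) ≤
        Finset.univ.sup fun i : Fin (dV V) => ((f.1 (bV V i)).support.sup id) :=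
      Finset.le_sup (f := fun i : Fin (dV V) => ((f.1 (bV V i)).support.sup id))
        (Finset.mem_univ i)
    omega
  have hall : ∀ v : V, f.1 v ∈ Finsupp.supported ℝ ℝ (Set.Iio n) := by
    have hle : (⊤ : Submodule ℝ V) ≤
        Submodule.comap f.1 (Finsupp.supported ℝ ℝ (Set.Iio n)) := by
      rw [← (bV V).span_eq]
      apply Submodule.span_le.2
      rintro _ ⟨i, rfl⟩
      exact hbasis i
    intro v
    exact hle (Submodule.mem_top)
  have hsupp : ∀ v : V, ∀ k ∈ (f.1 v).support, k < n := by
    intro v k hk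
    have := (Finsupp.mem_supported ℝ (f.1 v)).1 (hall v) hk
    simpa using this
  refine ⟨⟨n, ⟨trunc n ∘ₗ f.1, trunc_comp_injective V n f.1 f.2 hsupp⟩⟩, ?_⟩
  apply Subtype.ext
  apply LinearMap.ext
  intro v
  exact extend_trunc V n f.1 hsupp v

lemma bigF_isQuotientMap : IsQuotientMap (bigF V) := by
  refine ⟨⟨?_⟩, bigF_surjective V⟩
  show (⨆ n : ℕ, TopologicalSpace.coinduced (extendEmb V n) inferInstance) =
    TopologicalSpace.coinduced (bigF V) instTopologicalSpaceSigma
  rw [instTopologicalSpaceSigma, coinduced_iSup]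
  apply iSup_congr
  intro n
  rw [coinduced_compose]
  rfl

lemma cont_extendEmb (n : ℕ) : Continuous (extendEmb V n) :=
  continuous_iSup_rng (i := n) continuous_coinduced_rng

lemma cont_Hfun : Continuous (Hfun V) := by
  apply (bigF_isQuotientMap V).continuous_lift_prod_right
  -- reduce to each summand of the sigma type
  have key : Continuous fun q : (Σ n : ℕ, EmbFin V n × unitInterval) =>
      Hfun V (q.2.2, extendEmb V q.1 q.2.1) := by
    apply continuous_sigma
    intro n
    have heq : (fun a : EmbFin V n × unitInterval => Hfun V (a.2, extendEmb V n a.1)) =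
        fun a => extendEmb V (Mn V n) (stepEmb V n (a.2, a.1)) := by
      funext a
      exact (extend_step V n (a.2, a.1)).symm
    rw [heq]
    exact (cont_extendEmb V (Mn V n)).comp
      ((cont_step V n).comp (continuous_snd.prodMk continuous_fst))
  have heq2 : (fun p : unitInterval × (Σ n : ℕ, EmbFin V n) => Hfun V (p.1, bigF V p.2)) =
      (fun q : (Σ n : ℕ, EmbFin V n × unitInterval) => Hfun V (q.2.2, extendEmb V q.1 q.2.1)) ∘
        (Homeomorph.sigmaProdDistrib.toFun ∘ Prod.swap) := by
    funext p
    rcases p with ⟨t, ⟨n, f⟩⟩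
    rfl
  rw [heq2]
  exact key.comp (Homeomorph.sigmaProdDistrib.continuous.comp continuous_swap)

/-- The space of linear embeddings of a finite-dimensional real vector space `V` into
`ℝ^∞`, with the colimit topology, is contractible. -/
theorem embInf_contractible : ContractibleSpace (EmbInf V) := by
  rw [contractible_iff_id_nullhomotopic]
  refine ⟨⟨jmap V, jmap_injective V⟩, ?_⟩
  refine ⟨⟨⟨Hfun V, cont_Hfun V⟩, ?_, ?_⟩⟩
  · intro f
    apply Subtype.ext
    show combo V ((0 : unitInterval) : ℝ) f.1 = f.1
    rw [Set.Icc.coe_zero]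
    exact combo_zero V f.1
  · intro f
    apply Subtype.ext
    show combo V ((1 : unitInterval) : ℝ) f.1 = jmap V
    rw [Set.Icc.coe_one]
    exact combo_one V f.1

end
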